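/- Fix q ∈ (0,1) and δ > 0, and let f(x) = x·(1 + δ·q·(1−x)) / (1 + δ·x·(1−x)). Then for every initial condition x ∈ (0,1), the sequence of iterates fⁿ(x) converges to q as n → ∞. -/

import Mathlib

open Filter

set_option maxHeartbeats 1000000 in
/-- Fix `q ∈ (0,1)` and `δ > 0`, and let
`f x = x * (1 + δ*q*(1-x)) / (1 + δ*x*(1-x))`.
Then for every initial condition `x ∈ (0,1)`, the sequence of iterates
`f^[n] x` converges to `q` as `n → ∞`. -/
theorem bio_global_convergence (q δ : ℝ) (hq : q ∈ Set.Ioo (0:ℝ) 1) (hδ : 0 < δ)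
    (f : ℝ → ℝ)
    (hf : ∀ x : ℝ, f x = x * (1 + δ * q * (1 - x)) / (1 + δ * x * (1 - x))) :
    ∀ x ∈ Set.Ioo (0:ℝ) 1,
      Tendsto (fun n : ℕ => f^[n] x) atTop (nhds q) := by
  obtain ⟨hq0, hq1⟩ := hq
  rintro x ⟨hx0, hx1⟩
  set a := min x q with ha
  set b := max x q with hb
  have ha0 : 0 < a := lt_min hx0 hq0
  have hb1 : b < 1 := max_lt hx1 hq1
  have hab : a ≤ b := min_le_max
  have haq : a ≤ q := min_le_right _ _
  have hqb : q ≤ b := le_max_right _ _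
  set c := min (a * (1 - a)) (b * (1 - b)) with hc
  have hc0 : 0 < c := by
    apply lt_min <;> nlinarith
  have hD0 : 0 < 1 + δ * c := by nlinarith
  set r := 1 / (1 + δ * c) with hr
  have hr0 : 0 ≤ r := by positivity
  have hr1 : r < 1 := by
    rw [hr, div_lt_one hD0]; nlinarith
  -- the key step lemma
  have step : ∀ y, a ≤ y → y ≤ b →
      (a ≤ f y ∧ f y ≤ b) ∧ |f y - q| ≤ r * |y - q| := by
    intro y hay hyb
    have hy0 : 0 < y := lt_of_lt_of_le ha0 hay
    have hy1 : y < 1 := lt_of_le_of_lt hyb hb1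
    have hyy : 0 < y * (1 - y) := mul_pos hy0 (by linarith)
    have hD : 0 < 1 + δ * y * (1 - y) := by nlinarith
    have hD1 : 1 ≤ 1 + δ * y * (1 - y) := by nlinarith
    have hcy : c ≤ y * (1 - y) := by
      rcases le_total y (1/2) with h | h
      · have h1 : a * (1 - a) ≤ y * (1 - y) := by
          have : a ≤ 1/2 := le_trans hay h
          nlinarith
        exact le_trans (min_le_left _ _) h1
      · have h1 : b * (1 - b) ≤ y * (1 - y) := by
          have : (1/2 : ℝ) ≤ b := le_trans h hyb
          nlinarith
        exact le_trans (min_le_right _ _) h1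
    have hDc : 1 + δ * c ≤ 1 + δ * y * (1 - y) := by nlinarith
    have hkey : f y - q = (y - q) / (1 + δ * y * (1 - y)) := by
      rw [hf]; rw [eq_div_iff hD.ne', sub_mul, div_mul_cancel₀ _ hD.ne']; ring
    constructor
    · -- f y stays between y and q, hence in [a,b]
      rcases le_total y q with h | h
      · have h1 : y ≤ f y := by
          have : f y - y = (y - q) / (1 + δ * y * (1 - y)) - (y - q) := by
            rw [← hkey]; ring
          have h2 : (y - q) / (1 + δ * y * (1 - y)) - (y - q) ≥ 0 := by
            rw [ge_iff_le, sub_nonneg, le_div_iff₀ hD]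
            nlinarith
          linarith [this, h2]
        have h2 : f y ≤ q := by
          have h3 : (y - q) / (1 + δ * y * (1 - y)) ≤ 0 :=
            div_nonpos_of_nonpos_of_nonneg (by linarith) hD.le
          linarith [hkey, h3]
        exact ⟨le_trans hay h1, le_trans h2 hqb⟩
      · have h1 : f y ≤ y := by
          have : f y - y = (y - q) / (1 + δ * y * (1 - y)) - (y - q) := by
            rw [← hkey]; ring
          have h2 : (y - q) / (1 + δ * y * (1 - y)) - (y - q) ≤ 0 := by
            rw [sub_nonpos, div_le_iff₀ hD]
            have h4 : 0 ≤ (y - q) * (δ * (y * (1 - y))) :=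
              mul_nonneg (by linarith) (mul_nonneg hδ.le hyy.le)
            nlinarith [h4]
          linarith [this, h2]
        have h2 : q ≤ f y := by
          have h3 : 0 ≤ (y - q) / (1 + δ * y * (1 - y)) :=
            div_nonneg (by linarith) (le_of_lt hD)
          linarith [hkey, h3]
        exact ⟨le_trans haq h2, le_trans h1 hyb⟩
    · rw [hkey, abs_div, abs_of_pos hD]
      calc |y - q| / (1 + δ * y * (1 - y)) ≤ |y - q| / (1 + δ * c) := by
            gcongr
        _ = r * |y - q| := by rw [hr]; ring
  -- induction: invariant and geometric bound
  have key : ∀ n : ℕ, (a ≤ f^[n] x ∧ f^[n] x ≤ b) ∧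
      |f^[n] x - q| ≤ r ^ n * |x - q| := by
    intro n
    induction n with
    | zero => simp [ha, hb, min_le_left, le_max_left]
    | succ n ih =>
      obtain ⟨⟨h1, h2⟩, h3⟩ := ih
      rw [Function.iterate_succ_apply']
      obtain ⟨hmem, hcon⟩ := step _ h1 h2
      refine ⟨hmem, ?_⟩
      calc |f (f^[n] x) - q| ≤ r * |f^[n] x - q| := hcon
      _ ≤ r * (r ^ n * |x - q|) := by
          exact mul_le_mul_of_nonneg_left h3 hr0
      _ = r ^ (n + 1) * |x - q| := by ring
  -- conclude convergence
  rw [tendsto_iff_dist_tendsto_zero]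
  simp only [Real.dist_eq]
  apply squeeze_zero (fun n => abs_nonneg _) (fun n => (key n).2)
  have h0 : Tendsto (fun n : ℕ => r ^ n) atTop (nhds 0) :=
    tendsto_pow_atTop_nhds_zero_of_lt_one hr0 hr1
  simpa using h0.mul_const |x - q|
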